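/- Let 𝔤₁ and 𝔤₂ be Lie algebras over a field k, equipped with bilinear maps ▷ : 𝔤₂ × 𝔤₁ → 𝔤₁ and ◁ : 𝔤₂ × 𝔤₁ → 𝔤₂ satisfying: [x,y]▷a = x▷(y▷a) − y▷(x▷a); x◁[a,b] = (x◁a)◁b − (x◁b)◁a; x▷[a,b] = [x▷a, b] + [a, x▷b] + (x◁a)▷b − (x◁b)▷a; and [x,y]◁a = [x, y◁a] + [x◁a, y] + x◁(y▷a) − y◁(x▷a), for all a,b ∈ 𝔤₁ and x,y ∈ 𝔤₂. Then the bracket on the vector space 𝔤₁ × 𝔤₂ defined by [(a,x),(b,y)] = ([a,b] + x▷b − y▷a, [x,y] + x◁b − y◁a) is alternating and satisfies the Jacobi identity, so it makes 𝔤₁ × 𝔤₂ into a Lie algebra in which 𝔤₁ × {0} and {0} × 𝔤₂ are Lie subalgebras. -/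
import Mathlib


/-- The bicrossed product bracket on `g1 × g2` arising from a matched pair of Lie
algebras is alternating, satisfies the Jacobi identity, and `g1 × {0}`, `{0} × g2`
are closed under it. -/
theorem bicrossed_product_lie_algebra
    {k : Type*} [Field k] {g1 g2 : Type*}
    [LieRing g1] [LieAlgebra k g1] [LieRing g2] [LieAlgebra k g2]
    (tr : g2 →ₗ[k] g1 →ₗ[k] g1) (tl : g2 →ₗ[k] g1 →ₗ[k] g2)
    (h1 : ∀ (x y : g2) (a : g1), tr ⁅x, y⁆ a = tr x (tr y a) - tr y (tr x a))
    (h2 : ∀ (x : g2) (a b : g1), tl x ⁅a, b⁆ = tl (tl x a) b - tl (tl x b) a)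
    (h3 : ∀ (x : g2) (a b : g1),
      tr x ⁅a, b⁆ = ⁅tr x a, b⁆ + ⁅a, tr x b⁆ + tr (tl x a) b - tr (tl x b) a)
    (h4 : ∀ (x y : g2) (a : g1),
      tl ⁅x, y⁆ a = ⁅x, tl y a⁆ + ⁅tl x a, y⁆ + tl x (tr y a) - tl y (tr x a))
    (B : g1 × g2 → g1 × g2 → g1 × g2)
    (hB : ∀ (a b : g1) (x y : g2),
      B (a, x) (b, y) = (⁅a, b⁆ + tr x b - tr y a, ⁅x, y⁆ + tl x b - tl y a)) :
    (∀ p, B p p = 0) ∧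
    (∀ p q r, B p (B q r) + B q (B r p) + B r (B p q) = 0) ∧
    (∀ a b : g1, (B (a, 0) (b, 0)).2 = 0) ∧
    (∀ x y : g2, (B (0, x) (0, y)).1 = 0) := by
  refine ⟨?_, ?_, ?_, ?_⟩
  · rintro ⟨a, x⟩
    simp [hB]
  · rintro ⟨a, x⟩ ⟨b, y⟩ ⟨c, z⟩
    simp only [hB, Prod.mk_add_mk, Prod.mk_eq_zero, map_add, map_sub, lie_add, add_lie, lie_sub,
      sub_lie, h1, h2, h3, h4, LinearMap.add_apply, LinearMap.sub_apply]
    constructor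
    · rw [← lie_skew ((tr x) b) c, ← lie_skew ((tr y) c) a, ← lie_skew ((tr z) a) b]
      linear_combination (norm := abel) lie_jacobi a b c
    · rw [← lie_skew ((tl y) a) z, ← lie_skew ((tl z) b) x, ← lie_skew ((tl x) c) y]
      linear_combination (norm := abel) lie_jacobi x y z
  · intro a b
    simp [hB]
  · intro x y
    simp [hB]
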